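/- Let k ≥ 1 and let i₁, i₂ be integers with 0 ≤ i₁, i₂ ≤ k. Then sin(π(i₁+1)/(k+2)) · sin(π(i₂+1)/(k+2)) = sin(π/(k+2)) · Σ_{i₃} sin(π(i₃+1)/(k+2)), where the sum runs over all integers i₃ with |i₁−i₂| ≤ i₃ ≤ i₁+i₂, i₁+i₂+i₃ even, and i₁+i₂+i₃ ≤ 2k. Equivalently, the quantities sin(π(i+1)/(k+2))/sin(π/(k+2)) (the quantum dimensions of the irreducible L(k,0)-modules L(k,i)) are multiplicative with respect to the fusion rules of L(k,0). -/
import Mathlib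


open Real

private lemma aux2 (x y : ℝ) :
    Real.cos (x - y) - Real.cos (x + y) = 2 * Real.sin x * Real.sin y := by
  rw [Real.cos_sub_cos]
  have h1 : (x - y + (x + y)) / 2 = x := by ring
  have h2 : (x - y - (x + y)) / 2 = -y := by ring
  rw [h1, h2, Real.sin_neg]; ring

/-- Quantum dimensions `sin(π(i+1)/(k+2))/sin(π/(k+2))` of the irreducible `L(k,0)`-modules
`L(k,i)` are multiplicative with respect to the fusion rules of `L(k,0)`:
`sin(π(i₁+1)/(k+2))·sin(π(i₂+1)/(k+2)) = sin(π/(k+2))·Σ_{i₃} sin(π(i₃+1)/(k+2))`, the sum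
over all `i₃` with `|i₁-i₂| ≤ i₃ ≤ i₁+i₂`, `i₁+i₂+i₃` even, `i₁+i₂+i₃ ≤ 2k`. -/
theorem statement8 (k i₁ i₂ : ℕ) (hk : 1 ≤ k) (h₁ : i₁ ≤ k) (h₂ : i₂ ≤ k) :
    Real.sin (π * ((i₁ : ℝ) + 1) / ((k : ℝ) + 2)) * Real.sin (π * ((i₂ : ℝ) + 1) / ((k : ℝ) + 2)) =
      Real.sin (π / ((k : ℝ) + 2)) *
        ∑ i₃ ∈ (Finset.range (2 * k + 1)).filter
            (fun i₃ => i₁ - i₂ ≤ i₃ ∧ i₂ - i₁ ≤ i₃ ∧ i₃ ≤ i₁ + i₂ ∧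
              Even (i₁ + i₂ + i₃) ∧ i₁ + i₂ + i₃ ≤ 2 * k),
          Real.sin (π * ((i₃ : ℝ) + 1) / ((k : ℝ) + 2)) := by
  wlog hle : i₂ ≤ i₁ generalizing i₁ i₂ with H
  · rw [mul_comm, H i₂ i₁ h₂ h₁ (by omega)]
    congr 1
    apply Finset.sum_congr
    · apply Finset.filter_congr
      intro x _
      rw [add_comm i₂ i₁]
      tauto
    · intro x _; rfl
  have hN0 : ((k : ℝ) + 2) ≠ 0 := by positivity
  set m := min i₂ (k - i₁) with hm
  have hset : (Finset.range (2 * k + 1)).filter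
        (fun i₃ => i₁ - i₂ ≤ i₃ ∧ i₂ - i₁ ≤ i₃ ∧ i₃ ≤ i₁ + i₂ ∧
          Even (i₁ + i₂ + i₃) ∧ i₁ + i₂ + i₃ ≤ 2 * k)
      = (Finset.range (m + 1)).image (fun j => i₁ - i₂ + 2 * j) := by
    ext x
    simp only [Finset.mem_filter, Finset.mem_range, Finset.mem_image, Nat.even_iff]
    constructor
    · rintro ⟨hx, ha, hb, hc, hd, he⟩
      exact ⟨(x - (i₁ - i₂)) / 2, by omega, by omega⟩
    · rintro ⟨j, hj, rfl⟩
      omega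
  rw [hset, Finset.sum_image (fun a _ b _ h => by omega), Finset.mul_sum]
  have key : ∀ j ∈ Finset.range (m + 1),
      Real.sin (π / ((k : ℝ) + 2)) *
        Real.sin (π * (((i₁ - i₂ + 2 * j : ℕ) : ℝ) + 1) / ((k : ℝ) + 2))
      = Real.cos (π * ((i₁ : ℝ) - i₂ + 2 * j) / ((k : ℝ) + 2)) / 2 -
        Real.cos (π * ((i₁ : ℝ) - i₂ + 2 * (j + 1 : ℕ)) / ((k : ℝ) + 2)) / 2 := by
    intro j _
    have hc : ((i₁ - i₂ + 2 * j : ℕ) : ℝ) = (i₁ : ℝ) - i₂ + 2 * j := by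
      push_cast [Nat.cast_sub hle]; ring
    have hxy : Real.cos (π * ((i₁ : ℝ) - i₂ + 2 * j) / ((k : ℝ) + 2)) -
        Real.cos (π * ((i₁ : ℝ) - i₂ + 2 * (j + 1 : ℕ)) / ((k : ℝ) + 2))
        = 2 * Real.sin (π * (((i₁ : ℝ) - i₂ + 2 * j) + 1) / ((k : ℝ) + 2)) *
            Real.sin (π / ((k : ℝ) + 2)) := by
      have e1 : π * ((i₁ : ℝ) - i₂ + 2 * j) / ((k : ℝ) + 2)
          = π * (((i₁ : ℝ) - i₂ + 2 * j) + 1) / ((k : ℝ) + 2) - π / ((k : ℝ) + 2) := by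
        field_simp; ring
      have e2 : π * ((i₁ : ℝ) - i₂ + 2 * (j + 1 : ℕ)) / ((k : ℝ) + 2)
          = π * (((i₁ : ℝ) - i₂ + 2 * j) + 1) / ((k : ℝ) + 2) + π / ((k : ℝ) + 2) := by
        push_cast; field_simp; ring
      rw [e1, e2, aux2]
    rw [hc]
    linarith [hxy]
  rw [Finset.sum_congr rfl key, Finset.sum_range_sub']
  have hend : Real.cos (π * ((i₁ : ℝ) - i₂ + 2 * ((m : ℕ) + 1 : ℕ)) / ((k : ℝ) + 2))
      = Real.cos (π * ((i₁ : ℝ) + i₂ + 2) / ((k : ℝ) + 2)) := by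
    rcases min_cases i₂ (k - i₁) with ⟨he, _⟩ | ⟨he, hlt⟩
    · rw [hm, he]; push_cast; ring_nf
    · rw [hm, he]
      have hcast : ((k - i₁ : ℕ) : ℝ) = (k : ℝ) - i₁ := by
        push_cast [Nat.cast_sub h₁]; ring
      have : π * ((i₁ : ℝ) - i₂ + 2 * ((k - i₁ : ℕ) + 1 : ℕ)) / ((k : ℝ) + 2)
          = 2 * π - π * ((i₁ : ℝ) + i₂ + 2) / ((k : ℝ) + 2) := by
        push_cast [Nat.cast_sub h₁]
        field_simp
        ring
      rw [this, Real.cos_sub]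
      simp [Real.cos_two_pi, Real.sin_two_pi]
  have hstart : Real.sin (π * ((i₁ : ℝ) + 1) / ((k : ℝ) + 2)) *
      Real.sin (π * ((i₂ : ℝ) + 1) / ((k : ℝ) + 2))
      = (Real.cos (π * ((i₁ : ℝ) - i₂ + 2 * (0 : ℕ)) / ((k : ℝ) + 2)) -
          Real.cos (π * ((i₁ : ℝ) + i₂ + 2) / ((k : ℝ) + 2))) / 2 := by
    have e1 : π * ((i₁ : ℝ) - i₂ + 2 * (0 : ℕ)) / ((k : ℝ) + 2)
        = π * ((i₁ : ℝ) + 1) / ((k : ℝ) + 2) - π * ((i₂ : ℝ) + 1) / ((k : ℝ) + 2) := by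
      push_cast; field_simp; ring
    have e2 : π * ((i₁ : ℝ) + i₂ + 2) / ((k : ℝ) + 2)
        = π * ((i₁ : ℝ) + 1) / ((k : ℝ) + 2) + π * ((i₂ : ℝ) + 1) / ((k : ℝ) + 2) := by
      field_simp; ring
    rw [e1, e2, aux2]; ring
  rw [hstart, hend]
  ring
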